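/- A finite simple graph Γ is a highly-regular graph if and only if its complement Γ̄ is a highly-regular graph. -/

import Mathlib

/-- A partition of the vertex set (encoded as a cell-assignment map `P : V → Fin m`)
witnessing that `C` is a collapsed adjacency matrix at the vertex `u`:
the cell of index `0` is exactly `{u}`, every cell is nonempty, and every vertex in
cell `j` has exactly `C i j` neighbours in cell `i`. -/
def IsWitnessingPartition {V : Type*} [Fintype V] (G : SimpleGraph V) {m : ℕ}
    (C : Fin m → Fin m → ℕ) (u : V) (P : V → Fin m) : Prop :=
  (∀ v : V, (P v : ℕ) = 0 ↔ v = u) ∧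
  (∀ t : Fin m, ∃ v : V, P v = t) ∧
  (∀ (i j : Fin m) (y : V), P y = j → {z : V | P z = i ∧ G.Adj y z}.ncard = C i j)

/-- `C` is a collapsed adjacency matrix (CAM) of size `m` for `G`: `2 ≤ m`, `m < n`
(with `m = n` allowed only when `n = 2`), and every vertex admits a witnessing partition. -/
def IsCAM {V : Type*} [Fintype V] (G : SimpleGraph V) {m : ℕ}
    (C : Fin m → Fin m → ℕ) : Prop :=
  2 ≤ m ∧ (m < Fintype.card V ∨ (m = Fintype.card V ∧ Fintype.card V = 2)) ∧
  ∀ u : V, ∃ P : V → Fin m, IsWitnessingPartition G C u P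

/-- A graph is highly-regular if it admits some CAM. -/
def IsHighlyRegular {V : Type*} [Fintype V] (G : SimpleGraph V) : Prop :=
  ∃ (m : ℕ) (C : Fin m → Fin m → ℕ), IsCAM G C

/-- The index of a highly-regular graph: the least size of a CAM. -/
noncomputable def hrIndex {V : Type*} [Fintype V] (G : SimpleGraph V) : ℕ :=
  sInf {m : ℕ | ∃ C : Fin m → Fin m → ℕ, IsCAM G C}

/-- A connected graph is distance-regular if the numbers `|D_1(v) ∩ D_{i-1}(u)|`,
`|D_1(v) ∩ D_i(u)|`, `|D_1(v) ∩ D_{i+1}(u)|` depend only on `i = d(u,v)`. -/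
def IsDistanceRegular {V : Type*} [Fintype V] (G : SimpleGraph V) : Prop :=
  G.Connected ∧ ∀ i : ℕ, 1 ≤ i → i ≤ G.diam →
    ∀ j : ℕ, j = i - 1 ∨ j = i ∨ j = i + 1 →
    ∀ u v x y : V, G.dist u v = i → G.dist x y = i →
      {w : V | G.Adj v w ∧ G.dist u w = j}.ncard =
      {w : V | G.Adj y w ∧ G.dist x w = j}.ncard

namespace Stmt8Aux
open Finset

attribute [local instance] Classical.propDecidable
set_option linter.unusedSectionVars false

variable {V : Type*} [Fintype V] {G : SimpleGraph V} {m : ℕ} {C : Fin m → Fin m → ℕ}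

noncomputable def cellF (P : V → Fin m) (i : Fin m) : Finset V :=
  Finset.univ.filter (fun v => P v = i)

lemma ncard_coe {s : Set V} {t : Finset V} (h : ∀ z, z ∈ s ↔ z ∈ t) : s.ncard = t.card := by
  rw [show s = ↑t from Set.ext (by simpa using h), Set.ncard_coe_finset]

/-- the step relation on cell indices determined by `C` -/
def Rel (C : Fin m → Fin m → ℕ) (a b : Fin m) : Prop := C a b ≠ 0

/-- reachability of a cell index from the base cell `0` -/
def Reach [NeZero m] (C : Fin m → Fin m → ℕ) (j : Fin m) : Prop :=
  Relation.ReflTransGen (Rel C) 0 j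

variable {u : V} {P : V → Fin m}

lemma wp_count (hP : IsWitnessingPartition G C u P) {i j : Fin m} {y : V} (hy : P y = j) :
    ((cellF P i).filter (fun z => G.Adj y z)).card = C i j := by
  have h := hP.2.2 i j y hy
  rw [ncard_coe (t := (cellF P i).filter (fun z => G.Adj y z))
    (fun z => by simp [cellF])] at h
  exact h

lemma wp_cell_nonempty (hP : IsWitnessingPartition G C u P) (i : Fin m) :
    (cellF P i).Nonempty := by
  obtain ⟨v, hv⟩ := hP.2.1 i
  exact ⟨v, by simp [cellF, hv]⟩

lemma wp_base [NeZero m] (hP : IsWitnessingPartition G C u P) : P u = 0 := by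
  exact Fin.ext (by simpa using (hP.1 u).2 rfl)

lemma wp_cell_zero [NeZero m] (hP : IsWitnessingPartition G C u P) :
    cellF P 0 = {u} := by
  ext v
  simp only [cellF, mem_filter, mem_univ, true_and, mem_singleton]
  constructor
  · intro h; exact (hP.1 v).1 (by simp [h])
  · rintro rfl; exact wp_base hP

lemma wp_doublecount (hP : IsWitnessingPartition G C u P) (i j : Fin m) :
    (cellF P i).card * C j i = (cellF P j).card * C i j := by
  have h1 : ∑ x ∈ cellF P i, ((cellF P j).filter (fun z => G.Adj x z)).card
      = (cellF P i).card * C j i := by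
    rw [Finset.sum_congr rfl (fun x hx => wp_count hP (by simpa [cellF] using hx))]
    simp [mul_comm]
  have h2 : ∑ x ∈ cellF P j, ((cellF P i).filter (fun z => G.Adj x z)).card
      = (cellF P j).card * C i j := by
    rw [Finset.sum_congr rfl (fun x hx => wp_count hP (by simpa [cellF] using hx))]
    simp [mul_comm]
  rw [← h1, ← h2]
  simp only [Finset.card_filter]
  rw [Finset.sum_comm]
  refine Finset.sum_congr rfl fun x _ => Finset.sum_congr rfl fun z _ => ?_
  simp [SimpleGraph.adj_comm]

lemma rel_of_adj (hP : IsWitnessingPartition G C u P) {x z : V} (hxz : G.Adj x z) :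
    Rel C (P x) (P z) := by
  show C (P x) (P z) ≠ 0
  have h := hP.2.2 (P x) (P z) z rfl
  rw [← h]
  have hne : {w : V | P w = P x ∧ G.Adj z w}.Nonempty := ⟨x, rfl, hxz.symm⟩
  exact ((Set.ncard_pos (Set.toFinite _)).2 hne).ne'

lemma reach_cell_reachable [NeZero m] (hP : IsWitnessingPartition G C u P) :
    ∀ {j : Fin m}, Reach C j → ∀ v, P v = j → G.Reachable u v := by
  intro j h
  induction h with
  | refl =>
    intro v hv
    have : v = u := (hP.1 v).1 (by simp [hv])
    rw [this]
  | @tail a b hab hrel ih =>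
    intro v hv
    have h := hP.2.2 a b v hv
    have hne : {z : V | P z = a ∧ G.Adj v z}.Nonempty := by
      rw [← Set.ncard_pos (Set.toFinite _), h]
      exact Nat.pos_of_ne_zero hrel
    obtain ⟨x, hxa, hvx⟩ := hne
    exact (ih x hxa).trans hvx.symm.reachable

lemma reach_of_reachable [NeZero m] (hP : IsWitnessingPartition G C u P) {v : V}
    (h : G.Reachable u v) : Reach C (P v) := by
  obtain ⟨w⟩ := h
  have key : ∀ (x y : V) (_ : G.Walk x y), Reach C (P x) → Reach C (P y) := by
    intro x y w
    induction w with
    | nil => exact id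
    | @cons a b c hab w ih => exact fun hx => ih (hx.tail (rel_of_adj hP hab))
  exact key u v w (by rw [wp_base hP]; exact Relation.ReflTransGen.refl)

lemma wp_card_eq [NeZero m] {u' : V} {P' : V → Fin m}
    (hP : IsWitnessingPartition G C u P) (hP' : IsWitnessingPartition G C u' P') :
    ∀ {j : Fin m}, Reach C j → (cellF P j).card = (cellF P' j).card := by
  intro j h
  induction h with
  | refl => rw [wp_cell_zero hP, wp_cell_zero hP']; simp
  | @tail a b hab hrel ih =>
    have e1 := wp_doublecount hP b a
    have e2 := wp_doublecount hP' b a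
    rw [ih] at e1
    exact Nat.eq_of_mul_eq_mul_right (Nat.pos_of_ne_zero hrel) (e1.trans e2.symm)

/-- splitting a finset by adjacency to `y`, non-adjacency, and being `y` itself -/
lemma card_split (G : SimpleGraph V) (s : Finset V) (y : V) :
    (s.filter (fun z => G.Adj y z)).card + (s.filter (fun z => ¬ G.Adj y z ∧ z ≠ y)).card
      + (if y ∈ s then 1 else 0) = s.card := by
  have h1 := Finset.card_filter_add_card_filter_not (s := s) (p := fun z => G.Adj y z)
  have h2 := Finset.card_filter_add_card_filter_not
      (s := s.filter (fun z => ¬ G.Adj y z)) (p := fun z => z ≠ y)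
  rw [Finset.filter_filter, Finset.filter_filter] at h2
  have h3 : (s.filter (fun z => ¬ G.Adj y z ∧ ¬ z ≠ y)) = if y ∈ s then {y} else ∅ := by
    split
    case isTrue hy =>
      ext z
      simp only [mem_filter, mem_singleton, not_not]
      constructor
      · rintro ⟨_, _, rfl⟩; rfl
      · rintro rfl; exact ⟨hy, G.irrefl, rfl⟩
    case isFalse hy =>
      ext z
      simp only [mem_filter, notMem_empty, iff_false, not_and, not_not]
      rintro hz _ rfl; exact hy hz
  rw [h3] at h2
  have h4 : (if y ∈ s then ({y} : Finset V) else ∅).card = if y ∈ s then 1 else 0 := by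
    split <;> simp
  rw [h4] at h2
  omega

/-- the count of complement-neighbours in a cell -/
lemma wp_compl_count (hP : IsWitnessingPartition G C u P) {i j : Fin m} {y : V}
    (hy : P y = j) :
    {z : V | P z = i ∧ Gᶜ.Adj y z}.ncard + C i j + (if i = j then 1 else 0)
      = (cellF P i).card := by
  rw [ncard_coe (t := (cellF P i).filter (fun z => ¬ G.Adj y z ∧ z ≠ y)) (fun z => by
    simp only [Set.mem_setOf_eq, mem_filter, cellF, mem_univ, true_and,
      SimpleGraph.compl_adj]
    constructor
    · rintro ⟨h1, h2, h3⟩; exact ⟨h1, h3, Ne.symm h2⟩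
    · rintro ⟨h1, h2, h3⟩; exact ⟨h1, Ne.symm h3, h2⟩)]
  have h1 := card_split G (cellF P i) y
  have h2 : (if y ∈ cellF P i then 1 else 0) = (if i = j then 1 else 0) := by
    have hmem : y ∈ cellF P i ↔ i = j := by simp [cellF, hy, eq_comm]
    simp only [hmem]
  rw [wp_count hP hy, h2] at h1
  omega

/-- every base vertex has degree `∑ i, C i 0` -/
lemma wp_deg [NeZero m] (hP : IsWitnessingPartition G C u P) :
    (Finset.univ.filter (fun z => G.Adj u z)).card = ∑ i, C i 0 := by
  rw [Finset.card_eq_sum_card_fiberwise (f := P) (t := (univ : Finset (Fin m)))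
    (fun x _ => mem_univ _)]
  refine Finset.sum_congr rfl fun i _ => ?_
  rw [← wp_count hP (wp_base hP)]
  congr 1
  ext z
  simp only [mem_filter, mem_univ, true_and, cellF]
  exact and_comm

/-- existence of the compression interface for the reachable cells -/
lemma exists_index (C : Fin m → Fin m → ℕ) [NeZero m] :
    ∃ (s' : ℕ) (ι : Fin m → Fin (s' + 1)) (a : Fin (s' + 1) → Fin m),
      s' = (univ.filter (fun j => Reach C j)).card ∧ 1 ≤ s' ∧
      (∀ j, Reach C j → ((ι j : ℕ) < s')) ∧
      (∀ j, ¬ Reach C j → ι j = Fin.last s') ∧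
      (∀ i : Fin (s' + 1), (i : ℕ) < s' → Reach C (a i)) ∧
      (∀ i : Fin (s' + 1), (i : ℕ) < s' → ι (a i) = i) ∧
      (∀ j, Reach C j → a (ι j) = j) ∧
      ((ι 0 : ℕ) = 0) := by
  classical
  set S : Finset (Fin m) := univ.filter (fun j => Reach C j) with hS
  have h0S : (0 : Fin m) ∈ S := by
    simp only [hS, mem_filter, mem_univ, true_and]
    exact Relation.ReflTransGen.refl
  set s' := S.card with hs'
  have hs1 : 1 ≤ s' := Finset.card_pos.mpr ⟨0, h0S⟩
  set e := S.orderIsoOfFin (rfl : S.card = s') with he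
  have memS : ∀ {j : Fin m}, Reach C j → j ∈ S := fun {j} hj => by
    simp only [hS, mem_filter, mem_univ, true_and]; exact hj
  have reach_of_memS : ∀ {j : Fin m}, j ∈ S → Reach C j := fun {j} hj => by
    simpa [hS] using hj
  refine ⟨s', fun j => if h : Reach C j then (e.symm ⟨j, memS h⟩).castSucc else Fin.last s',
    fun i => if hi : (i : ℕ) < s' then ((e ⟨(i : ℕ), hi⟩ : S) : Fin m) else 0,
    rfl, hs1, ?_, ?_, ?_, ?_, ?_, ?_⟩
  · intro j hj
    simp only [dif_pos hj, Fin.coe_castSucc]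
    exact (e.symm ⟨j, memS hj⟩).isLt
  · intro j hj
    simp only [dif_neg hj]
  · intro i hi
    simp only [dif_pos hi]
    exact reach_of_memS (e ⟨(i : ℕ), hi⟩).2
  · intro i hi
    have hR : Reach C ((e ⟨(i : ℕ), hi⟩ : S) : Fin m) := reach_of_memS (e ⟨(i : ℕ), hi⟩).2
    simp only [dif_pos hi, dif_pos hR]
    have : (⟨((e ⟨(i : ℕ), hi⟩ : S) : Fin m), memS hR⟩ : {x // x ∈ S}) = e ⟨(i : ℕ), hi⟩ :=
      Subtype.ext rfl
    rw [this, OrderIso.symm_apply_apply]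
    exact Fin.ext rfl
  · intro j hj
    simp only [dif_pos hj]
    have hlt : ((e.symm ⟨j, memS hj⟩).castSucc : ℕ) < s' := (e.symm ⟨j, memS hj⟩).isLt
    simp only [dif_pos hlt]
    have : (⟨((e.symm ⟨j, memS hj⟩).castSucc : ℕ), hlt⟩ : Fin s') = e.symm ⟨j, memS hj⟩ :=
      Fin.ext rfl
    rw [this, OrderIso.apply_symm_apply]
  · have hR0 : Reach C (0 : Fin m) := Relation.ReflTransGen.refl
    simp only [dif_pos hR0, Fin.coe_castSucc]
    have hmin : e ⟨0, hs1⟩ = ⟨0, h0S⟩ := by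
      obtain ⟨k, hk⟩ := e.surjective ⟨0, h0S⟩
      have h1 : e ⟨0, hs1⟩ ≤ e k := e.monotone (by simp [Fin.le_def])
      rw [hk] at h1
      have h2 : ((e ⟨0, hs1⟩ : S) : Fin m) ≤ ((⟨0, h0S⟩ : S) : Fin m) :=
        Subtype.coe_le_coe.2 h1
      have h3 : ((⟨0, h0S⟩ : S) : Fin m) ≤ ((e ⟨0, hs1⟩ : S) : Fin m) := by
        show (0 : Fin m) ≤ _
        exact Fin.le_def.2 (by simp)
      exact Subtype.ext (le_antisymm h2 h3)
    have : e.symm ⟨0, memS hR0⟩ = ⟨0, hs1⟩ := by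
      rw [OrderIso.symm_apply_eq, hmin]
    rw [this]

/-- The main construction: the complement of a highly-regular graph is highly-regular. -/
lemma hr_compl (h : IsHighlyRegular G) : IsHighlyRegular Gᶜ := by
  classical
  obtain ⟨m, C, hm2, hmn, hW⟩ := h
  haveI : NeZero m := ⟨by omega⟩
  have card2 : 2 ≤ Fintype.card V := by rcases hmn with h | ⟨h1, h2⟩ <;> omega
  haveI : Nonempty V := Fintype.card_pos_iff.mp (by omega)
  obtain ⟨u₀⟩ := ‹Nonempty V›
  obtain ⟨P₀, hP₀⟩ := hW u₀
  set N : Fin m → ℕ := fun j => (cellF P₀ j).card with hN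
  have hsize : ∀ (u : V) (P : V → Fin m), IsWitnessingPartition G C u P →
      ∀ j, Reach C j → (cellF P j).card = N j :=
    fun u P hP j hj => wp_card_eq hP hP₀ hj
  have hNpos : ∀ j, 1 ≤ N j := fun j => (wp_cell_nonempty hP₀ j).card_pos
  by_cases hconn : ∀ u v : V, G.Reachable u v
  · -- connected case
    have hallreach : ∀ (u : V) (P : V → Fin m), IsWitnessingPartition G C u P →
        ∀ j, (cellF P j).card = N j := by
      intro u P hP j
      obtain ⟨v, hv⟩ := hP.2.1 j
      exact hsize u P hP j (hv ▸ reach_of_reachable hP (hconn u v))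
    refine ⟨m, fun i j => N i - C i j - (if i = j then 1 else 0), hm2, hmn, ?_⟩
    intro u
    obtain ⟨P, hP⟩ := hW u
    refine ⟨P, hP.1, hP.2.1, ?_⟩
    intro i j y hy
    show {z : V | P z = i ∧ Gᶜ.Adj y z}.ncard = N i - C i j - (if i = j then 1 else 0)
    have h1 := wp_compl_count hP hy (i := i)
    rw [hallreach u P hP i] at h1
    by_cases hij : i = j
    · rw [if_pos hij] at h1 ⊢; omega
    · rw [if_neg hij] at h1 ⊢; omega
  · -- disconnected case
    push_neg at hconn
    obtain ⟨u1, v1, hnr⟩ := hconn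
    have houtside : ∀ u : V, ∃ w, ¬ G.Reachable u w := by
      intro u
      by_contra hcon
      push_neg at hcon
      exact hnr ((hcon u1).symm.trans (hcon v1))
    obtain ⟨s', ι, a, hs'S, hs1, hιlt, hιlast, haR, hιa, haι, hι0⟩ := exists_index C
    set D : ℕ := ∑ i, C i 0 with hD
    have hdeg : ∀ y : V, (Finset.univ.filter (fun z => G.Adj y z)).card = D := by
      intro y
      obtain ⟨Py, hPy⟩ := hW y
      exact wp_deg hPy
    set compcard : ℕ := ∑ j ∈ univ.filter (fun j => Reach C j), N j with hcompcard_def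
    have hcompcard : ∀ (u : V) (P : V → Fin m), IsWitnessingPartition G C u P →
        (univ.filter (fun v => G.Reachable u v)).card = compcard := by
      intro u P hP
      rw [Finset.card_eq_sum_card_fiberwise (f := P) (t := univ.filter (fun j => Reach C j))
        (fun v hv => by
          simp only [coe_filter, mem_univ, true_and, Set.mem_setOf_eq] at hv ⊢
          exact reach_of_reachable hP hv)]
      refine Finset.sum_congr rfl fun j hj => ?_
      have hjR : Reach C j := by simpa using hj
      have hcell : (univ.filter (fun v => G.Reachable u v)).filter (fun v => P v = j)
          = cellF P j := by
        ext v
        simp only [mem_filter, mem_univ, true_and, cellF]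
        exact ⟨fun h => h.2, fun h => ⟨reach_cell_reachable hP hjR v h, h⟩⟩
      rw [hcell, hsize u P hP j hjR]
    have h2c : 2 * compcard ≤ Fintype.card V := by
      obtain ⟨w, hw⟩ := houtside u₀
      obtain ⟨Pw, hPw⟩ := hW w
      have hdisj : Disjoint (univ.filter (fun v => G.Reachable u₀ v))
          (univ.filter (fun v => G.Reachable w v)) := by
        rw [Finset.disjoint_left]
        intro v h1 h2
        simp only [mem_filter, mem_univ, true_and] at h1 h2
        exact hw (h1.trans h2.symm)
      have hcu := Finset.card_union_of_disjoint hdisj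
      have hle := Finset.card_le_univ ((univ.filter (fun v => G.Reachable u₀ v))
        ∪ (univ.filter (fun v => G.Reachable w v)))
      rw [hcu, hcompcard u₀ P₀ hP₀, hcompcard w Pw hPw] at hle
      omega
    have hs'c : s' ≤ compcard := by
      rw [hcompcard_def, hs'S]
      calc (univ.filter (fun j => Reach C j)).card
          = ∑ _j ∈ univ.filter (fun j => Reach C j), 1 := by simp
        _ ≤ ∑ j ∈ univ.filter (fun j => Reach C j), N j :=
            Finset.sum_le_sum (fun j _ => hNpos j)
    set C' : Fin (s' + 1) → Fin (s' + 1) → ℕ := fun i j =>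
      if hi : (i : ℕ) < s' then
        if hj : (j : ℕ) < s' then
          N (a i) - C (a i) (a j) - (if i = j then 1 else 0)
        else N (a i)
      else
        if (j : ℕ) < s' then Fintype.card V - compcard
        else Fintype.card V - compcard - 1 - D
      with hC'
    refine ⟨s' + 1, C', by omega, by omega, ?_⟩
    intro u
    obtain ⟨P, hP⟩ := hW u
    have hreach_iff : ∀ v, G.Reachable u v ↔ Reach C (P v) :=
      fun v => ⟨reach_of_reachable hP, fun h => reach_cell_reachable hP h v rfl⟩
    set Q : V → Fin (s' + 1) := fun v => ι (P v) with hQ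
    have hQcell : ∀ (t : Fin (s' + 1)), (t : ℕ) < s' → ∀ z, (Q z = t ↔ P z = a t) := by
      intro t ht z
      constructor
      · intro hz
        by_cases hR : Reach C (P z)
        · rw [← hz]
          show P z = a (ι (P z))
          exact (haι (P z) hR).symm
        · exfalso
          rw [hQ] at hz
          simp only at hz
          rw [hιlast (P z) hR] at hz
          rw [← hz] at ht
          simp [Fin.last] at ht
      · intro hz
        show ι (P z) = t
        rw [hz]
        exact hιa t ht
    have hQlast : ∀ z, (Q z = Fin.last s' ↔ ¬ G.Reachable u z) := by
      intro z
      rw [hreach_iff]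
      constructor
      · intro hz hR
        have := hιlt (P z) hR
        rw [show ι (P z) = Q z from rfl, hz] at this
        simp [Fin.last] at this
      · intro hR
        show ι (P z) = Fin.last s'
        exact hιlast (P z) hR
    have houtcard : (univ.filter (fun z => ¬ G.Reachable u z)).card
        = Fintype.card V - compcard := by
      have h1 := Finset.card_filter_add_card_filter_not
        (s := (univ : Finset V)) (p := fun v => G.Reachable u v)
      rw [hcompcard u P hP, Finset.card_univ] at h1
      omega
    refine ⟨Q, ?_, ?_, ?_⟩
    · -- cell 0 is {u}
      have hQu : ((Q u : ℕ)) = 0 := by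
        show ((ι (P u) : ℕ)) = 0
        rw [wp_base hP]
        exact hι0
      intro v
      constructor
      · intro hv
        by_cases hR : Reach C (P v)
        · have hlt : ((ι (P v)) : ℕ) < s' := hιlt (P v) hR
          have hQv : Q v = (0 : Fin (s' + 1)) := Fin.ext (by simpa using hv)
          have h0lt : ((0 : Fin (s' + 1)) : ℕ) < s' := by simp; omega
          have := (hQcell 0 h0lt v).1 hQv
          -- P v = a 0 ; and a 0 = 0 since ι 0 = 0
          have ha0 : a (0 : Fin (s' + 1)) = 0 := by
            have hR0 : Reach C (0 : Fin m) := Relation.ReflTransGen.refl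
            have := haι (0 : Fin m) hR0
            rwa [show ι (0 : Fin m) = (0 : Fin (s' + 1)) from Fin.ext (by simpa using hι0)]
              at this
          rw [ha0] at this
          exact (hP.1 v).1 (by simp [this])
        · exfalso
          have : Q v = Fin.last s' := hιlast (P v) hR
          rw [this] at hv
          simp [Fin.last] at hv
          omega
      · rintro rfl
        exact hQu
    · -- all cells nonempty
      intro t
      by_cases ht : (t : ℕ) < s'
      · obtain ⟨v, hv⟩ := hP.2.1 (a t)
        exact ⟨v, (hQcell t ht v).2 hv⟩
      · obtain ⟨w, hw⟩ := houtside u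
        refine ⟨w, ?_⟩
        rw [(hQlast w).2 hw]
        exact Fin.ext (by simp [Fin.last]; omega)
    · -- the counts
      intro i j y hQy
      by_cases hj : (j : ℕ) < s'
      · -- y is inside the component of u
        have hyb : P y = a j := (hQcell j hj y).1 hQy
        by_cases hi : (i : ℕ) < s'
        · -- both cells inside
          have hseteq : ∀ z, (z ∈ {z : V | Q z = i ∧ Gᶜ.Adj y z}
              ↔ z ∈ {z : V | P z = a i ∧ Gᶜ.Adj y z}) := by
            intro z
            simp only [Set.mem_setOf_eq]
            rw [hQcell i hi z]
          rw [Set.ext hseteq]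
          have h1 := wp_compl_count hP hyb (i := a i)
          rw [hsize u P hP (a i) (haR i hi)] at h1
          have hij : (i = j) ↔ (a i = a j) :=
            ⟨fun h => by rw [h], fun h => by rw [← hιa i hi, ← hιa j hj, h]⟩
          rw [hC']
          simp only [dif_pos hi, dif_pos hj]
          by_cases hc : i = j
          · rw [if_pos hc]
            rw [if_pos (hij.1 hc)] at h1
            omega
          · rw [if_neg hc]
            rw [if_neg (fun hh => hc (hij.2 hh))] at h1
            omega
        · -- i is the outside cell
          have hyR : G.Reachable u y := (hreach_iff y).2 (hyb ▸ haR j hj)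
          have hil : i = Fin.last s' := Fin.ext (by simp [Fin.last]; omega)
          rw [ncard_coe (t := univ.filter (fun z => ¬ G.Reachable u z)) (fun z => by
            simp only [Set.mem_setOf_eq, mem_filter, mem_univ, true_and, hil, hQlast]
            constructor
            · rintro ⟨h1, _⟩; exact h1
            · intro h1
              refine ⟨h1, ?_⟩
              rw [SimpleGraph.compl_adj]
              refine ⟨?_, fun hadj => h1 (hyR.trans hadj.reachable)⟩
              rintro rfl
              exact h1 hyR)]
          rw [houtcard, hC']
          simp only [dif_neg hi, if_pos hj]
      · -- y is outside the component of u
        have hjl : j = Fin.last s' := Fin.ext (by simp [Fin.last]; omega)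
        have hyout : ¬ G.Reachable u y := by
          rw [hjl] at hQy
          exact (hQlast y).1 hQy
        by_cases hi : (i : ℕ) < s'
        · -- inside cell, fully complement-adjacent to y
          rw [ncard_coe (t := cellF P (a i)) (fun z => by
            simp only [Set.mem_setOf_eq, cellF, mem_filter, mem_univ, true_and]
            rw [hQcell i hi z]
            constructor
            · rintro ⟨h1, _⟩; exact h1
            · intro h1
              have hzR : G.Reachable u z := (hreach_iff z).2 (h1 ▸ haR i hi)
              refine ⟨h1, ?_⟩
              rw [SimpleGraph.compl_adj]
              refine ⟨?_, fun hadj => hyout (hzR.trans hadj.symm.reachable)⟩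
              rintro rfl
              exact hyout hzR)]
          rw [hsize u P hP (a i) (haR i hi), hC']
          simp only [dif_pos hi, dif_neg hj]
        · -- both outside
          have hil : i = Fin.last s' := Fin.ext (by simp [Fin.last]; omega)
          set O : Finset V := univ.filter (fun z => ¬ G.Reachable u z) with hO
          rw [ncard_coe (t := O.filter (fun z => ¬ G.Adj y z ∧ z ≠ y)) (fun z => by
            simp only [Set.mem_setOf_eq, hO, mem_filter, mem_univ, true_and, hil, hQlast,
              SimpleGraph.compl_adj]
            constructor
            · rintro ⟨h1, h2, h3⟩; exact ⟨h1, h3, Ne.symm h2⟩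
            · rintro ⟨h1, h2, h3⟩; exact ⟨h1, Ne.symm h3, h2⟩)]
          have hOsplit := card_split G O y
          have hOadj : O.filter (fun z => G.Adj y z) = univ.filter (fun z => G.Adj y z) := by
            ext z
            simp only [hO, mem_filter, mem_univ, true_and]
            constructor
            · rintro ⟨_, h2⟩; exact h2
            · intro hadj
              refine ⟨fun hzR => hyout (hzR.trans hadj.symm.reachable), hadj⟩
          have hyO : y ∈ O := by simp [hO, hyout]
          rw [hOadj, if_pos hyO, hdeg y] at hOsplit
          have hOcard : O.card = Fintype.card V - compcard := houtcard
          rw [hC']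
          simp only [dif_neg hi, if_neg hj]
          omega

end Stmt8Aux

/-- A finite simple graph is highly-regular iff its complement is. -/
theorem stmt8 {V : Type*} [Fintype V] (G : SimpleGraph V) :
    IsHighlyRegular G ↔ IsHighlyRegular Gᶜ := by
  constructor
  · exact Stmt8Aux.hr_compl
  · intro h
    have := Stmt8Aux.hr_compl h
    rwa [compl_compl] at this
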